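/- For every sequence of depths D_1 < … < D_r, every d ≤ D_r, and all n⁻, n⁰, n⁺ ∈ ℕ^p, the pseudo-recursive truncated function at γ = 1 is an upper bound on the exact BART sub-correlation function: k_d(n⁻, n⁰, n⁺) ≤ k^{(D_1,…,D_r)}_{d,1}(n⁻, n⁰, n⁺). -/

import Mathlib

/-- Total weight `W(v) = Σ_{i : v_i ≠ 0} w_i` of the axes with at least one available split. -/
noncomputable def bartW (p : ℕ) (w : Fin p → ℝ) (v : Fin p → ℕ) : ℝ :=
  ∑ i ∈ Finset.univ.filter (fun i => v i ≠ 0), w i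

/-- The BART sub-correlation function `k_d(n⁻, n⁰, n⁺)`, defined by well-founded recursion
on `Σ_i (n⁻_i + n⁺_i)`. -/
noncomputable def bartK (p : ℕ) (w : Fin p → ℝ) (P : ℕ → ℝ)
    (d : ℕ) (nm n0 np : Fin p → ℕ) : ℝ :=
  if ∀ i, nm i + n0 i + np i = 0 then 1
  else
    1 - P d * (1 - (1 / bartW p w (fun i => nm i + n0 i + np i)) *
      ∑ i ∈ Finset.univ.filter (fun i => nm i + n0 i + np i ≠ 0),
        (w i / ((nm i + n0 i + np i : ℕ) : ℝ)) *
          ((∑ k ∈ (Finset.range (nm i)).attach,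
              bartK p w P (d+1) (Function.update nm i k.1) n0 np) +
           (∑ k ∈ (Finset.range (np i)).attach,
              bartK p w P (d+1) nm n0 (Function.update np i k.1))))
termination_by ∑ i, (nm i + np i)
decreasing_by
  · have hk : k.1 < nm i := Finset.mem_range.mp k.2
    refine Finset.sum_lt_sum (fun j _ => ?_) ⟨i, Finset.mem_univ i, ?_⟩
    · rcases eq_or_ne j i with rfl | hj
      · simp only [Function.update_self]; omega
      · simp only [Function.update_of_ne hj]; omega
    · simp only [Function.update_self]; omega
  · have hk : k.1 < np i := Finset.mem_range.mp k.2
    refine Finset.sum_lt_sum (fun j _ => ?_) ⟨i, Finset.mem_univ i, ?_⟩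
    · rcases eq_or_ne j i with rfl | hj
      · simp only [Function.update_self]; omega
      · simp only [Function.update_of_ne hj]; omega
    · simp only [Function.update_self]; omega

/-- Auxiliary pseudo-recursive truncated sub-correlation function `k̃_{d,γ}(current; original)`,
where `R = {D_1, …, D_{r-1}}` is the set of intermediate reset depths and `Dr = D_r` the final
truncation depth; `(bm, b0, bp)` are the original (full-grid) split counts. -/
noncomputable def bartKPRAux (p : ℕ) (w : Fin p → ℝ) (P : ℕ → ℝ)
    (R : Finset ℕ) (Dr : ℕ) (γ : ℝ) (bm b0 bp : Fin p → ℕ)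
    (d : ℕ) (nm n0 np : Fin p → ℕ) : ℝ :=
  if ∀ i, nm i + n0 i + np i = 0 then 1
  else if Dr ≤ d then
    (if ∀ i, n0 i = 0 then 1 else 1 - (1 - γ) * P Dr)
  else
    1 - P d * (1 - (1 / bartW p w (fun i => nm i + n0 i + np i)) *
      ∑ i ∈ Finset.univ.filter (fun i => nm i + n0 i + np i ≠ 0),
        (w i / ((nm i + n0 i + np i : ℕ) : ℝ)) *
          ((∑ k ∈ Finset.range (nm i),
              (if d + 1 ∈ R then bartKPRAux p w P R Dr γ bm b0 bp (d+1) bm b0 bp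
               else bartKPRAux p w P R Dr γ bm b0 bp (d+1) (Function.update nm i k) n0 np)) +
           (∑ k ∈ Finset.range (np i),
              (if d + 1 ∈ R then bartKPRAux p w P R Dr γ bm b0 bp (d+1) bm b0 bp
               else bartKPRAux p w P R Dr γ bm b0 bp (d+1) nm n0 (Function.update np i k)))))
termination_by Dr - d
decreasing_by all_goals omega

/-- The pseudo-recursive truncated sub-correlation function `k^{(D_1,…,D_{r+1})}_{d,γ}`,
where the strictly increasing depths are `Ds 0 < Ds 1 < … < Ds r` (so there are `r+1` of
them, the intermediate reset depths being `Ds 0, …, Ds (r-1)`). -/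
noncomputable def bartKPR (p : ℕ) (w : Fin p → ℝ) (P : ℕ → ℝ)
    (r : ℕ) (Ds : Fin (r+1) → ℕ) (γ : ℝ)
    (d : ℕ) (nm n0 np : Fin p → ℕ) : ℝ :=
  bartKPRAux p w P (Finset.image (fun j : Fin r => Ds j.castSucc) Finset.univ)
    (Ds (Fin.last r)) γ nm n0 np d nm n0 np

lemma bartW_pos {p : ℕ} {w : Fin p → ℝ} (hw : ∀ i, 0 < w i) {v : Fin p → ℕ}
    (h : ¬ ∀ i, v i = 0) : 0 < bartW p w v := by
  push_neg at h
  obtain ⟨i, hi⟩ := h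
  exact Finset.sum_pos (fun j _ => hw j) ⟨i, Finset.mem_filter.2 ⟨Finset.mem_univ i, hi⟩⟩

lemma bartW_nonneg {p : ℕ} {w : Fin p → ℝ} (hw : ∀ i, 0 < w i) (v : Fin p → ℕ) :
    0 ≤ bartW p w v :=
  Finset.sum_nonneg fun j _ => (hw j).le

lemma bartK_eq {p : ℕ} (w : Fin p → ℝ) (P : ℕ → ℝ) (d : ℕ) (nm n0 np : Fin p → ℕ)
    (h : ¬ ∀ i, nm i + n0 i + np i = 0) :
    bartK p w P d nm n0 np = 1 - P d * (1 - (1 / bartW p w (fun i => nm i + n0 i + np i)) *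
      ∑ i ∈ Finset.univ.filter (fun i => nm i + n0 i + np i ≠ 0),
        (w i / ((nm i + n0 i + np i : ℕ) : ℝ)) *
          ((∑ k ∈ Finset.range (nm i), bartK p w P (d+1) (Function.update nm i k) n0 np) +
           (∑ k ∈ Finset.range (np i), bartK p w P (d+1) nm n0 (Function.update np i k)))) := by
  rw [bartK, if_neg h]
  have h1 : ∀ i : Fin p,
      (∑ k ∈ (Finset.range (nm i)).attach, bartK p w P (d+1) (Function.update nm i k.1) n0 np)
      = ∑ k ∈ Finset.range (nm i), bartK p w P (d+1) (Function.update nm i k) n0 np :=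
    fun i => Finset.sum_attach (Finset.range (nm i))
      (fun m => bartK p w P (d+1) (Function.update nm i m) n0 np)
  have h2 : ∀ i : Fin p,
      (∑ k ∈ (Finset.range (np i)).attach, bartK p w P (d+1) nm n0 (Function.update np i k.1))
      = ∑ k ∈ Finset.range (np i), bartK p w P (d+1) nm n0 (Function.update np i k) :=
    fun i => Finset.sum_attach (Finset.range (np i))
      (fun m => bartK p w P (d+1) nm n0 (Function.update np i m))
  simp only [h1, h2]

/-- measure bookkeeping -/
lemma sum_upd {p : ℕ} (f g : Fin p → ℕ) (i : Fin p) (k : ℕ) :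
    (∑ j, (Function.update f i k j + g j)) + f i = (∑ j, (f j + g j)) + k := by
  have hs : ∀ h : Fin p → ℕ, ∑ j, (h j + g j) = ∑ j, h j + ∑ j, g j :=
    fun h => Finset.sum_add_distrib
  rw [hs, hs, Finset.sum_update_of_mem (Finset.mem_univ i),
    Finset.sum_eq_sum_sdiff_singleton_add (Finset.mem_univ i) f]
  ring

lemma sum_upd' {p : ℕ} (f g : Fin p → ℕ) (i : Fin p) (k : ℕ) :
    (∑ j, (f j + Function.update g i k j)) + g i = (∑ j, (f j + g j)) + k := by
  have hc : ∀ h h' : Fin p → ℕ, (∑ j, (h j + h' j)) = ∑ j, (h' j + h j) := by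
    intro h h'; apply Finset.sum_congr rfl; intros; omega
  rw [hc, hc f g]; exact sum_upd g f i k

lemma bartK_mem_Icc {p : ℕ} {w : Fin p → ℝ} {P : ℕ → ℝ}
    (hw : ∀ i, 0 < w i) (hP : ∀ d, P d ∈ Set.Icc (0 : ℝ) 1) :
    ∀ N d (nm n0 np : Fin p → ℕ), (∑ j, (nm j + np j)) < N →
      bartK p w P d nm n0 np ∈ Set.Icc (0 : ℝ) 1 := by
  intro N
  induction N using Nat.strong_induction_on with
  | _ N IH =>
  intro d nm n0 np hN
  by_cases h : ∀ i, nm i + n0 i + np i = 0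
  · rw [bartK, if_pos h]; exact ⟨zero_le_one, le_refl 1⟩
  · rw [bartK_eq w P d nm n0 np h]
    set W := bartW p w (fun i => nm i + n0 i + np i) with hWdef
    have hWpos : 0 < W := bartW_pos hw h
    set F := Finset.univ.filter (fun i => nm i + n0 i + np i ≠ 0) with hF
    set s : Fin p → ℝ := fun i => (w i / ((nm i + n0 i + np i : ℕ) : ℝ)) *
          ((∑ k ∈ Finset.range (nm i), bartK p w P (d+1) (Function.update nm i k) n0 np) +
           (∑ k ∈ Finset.range (np i), bartK p w P (d+1) nm n0 (Function.update np i k))) with hs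
    have hIccA : ∀ i : Fin p, ∀ k ∈ Finset.range (nm i),
        bartK p w P (d+1) (Function.update nm i k) n0 np ∈ Set.Icc (0:ℝ) 1 := by
      intro i k hk
      refine IH (∑ j, (nm j + np j)) hN (d+1) _ n0 np ?_
      have := sum_upd nm np i k
      have hk' := Finset.mem_range.mp hk
      omega
    have hIccB : ∀ i : Fin p, ∀ k ∈ Finset.range (np i),
        bartK p w P (d+1) nm n0 (Function.update np i k) ∈ Set.Icc (0:ℝ) 1 := by
      intro i k hk
      refine IH (∑ j, (nm j + np j)) hN (d+1) nm n0 _ ?_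
      have := sum_upd' nm np i k
      have hk' := Finset.mem_range.mp hk
      omega
    have hs0 : ∀ i ∈ F, 0 ≤ s i := by
      intro i _
      apply mul_nonneg (div_nonneg (hw i).le (Nat.cast_nonneg _))
      apply add_nonneg <;> exact Finset.sum_nonneg (fun k hk => by
        first
        | exact (hIccA i k hk).1
        | exact (hIccB i k hk).1)
    have hs1 : ∀ i ∈ F, s i ≤ w i := by
      intro i hi
      have hne : nm i + n0 i + np i ≠ 0 := (Finset.mem_filter.mp hi).2
      have hnpos : (0:ℝ) < ((nm i + n0 i + np i : ℕ) : ℝ) := by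
        exact_mod_cast Nat.pos_of_ne_zero hne
      have hA : (∑ k ∈ Finset.range (nm i), bartK p w P (d+1) (Function.update nm i k) n0 np)
          ≤ (nm i : ℝ) := by
        calc _ ≤ ∑ _k ∈ Finset.range (nm i), (1:ℝ) :=
              Finset.sum_le_sum (fun k hk => (hIccA i k hk).2)
          _ = (nm i : ℝ) := by simp
      have hB : (∑ k ∈ Finset.range (np i), bartK p w P (d+1) nm n0 (Function.update np i k))
          ≤ (np i : ℝ) := by
        calc _ ≤ ∑ _k ∈ Finset.range (np i), (1:ℝ) :=
              Finset.sum_le_sum (fun k hk => (hIccB i k hk).2)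
          _ = (np i : ℝ) := by simp
      have hcast : (nm i : ℝ) + (np i : ℝ) ≤ ((nm i + n0 i + np i : ℕ) : ℝ) := by
        push_cast; linarith [Nat.cast_nonneg (α := ℝ) (n0 i)]
      calc s i ≤ (w i / ((nm i + n0 i + np i : ℕ) : ℝ)) * ((nm i + n0 i + np i : ℕ) : ℝ) := by
            apply mul_le_mul_of_nonneg_left _ (div_nonneg (hw i).le hnpos.le)
            linarith
        _ = w i := div_mul_cancel₀ _ hnpos.ne'
    have hS0 : 0 ≤ ∑ i ∈ F, s i := Finset.sum_nonneg hs0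
    have hSW : ∑ i ∈ F, s i ≤ W := by
      calc ∑ i ∈ F, s i ≤ ∑ i ∈ F, w i := Finset.sum_le_sum hs1
        _ = W := rfl
    have hx0 : 0 ≤ (1 / W) * ∑ i ∈ F, s i := by positivity
    have hx1 : (1 / W) * ∑ i ∈ F, s i ≤ 1 := by
      rw [div_mul_eq_mul_div, one_mul, div_le_one hWpos]; exact hSW
    have hPd := hP d
    simp only [Set.mem_Icc] at hPd ⊢
    constructor
    · nlinarith [hPd.1, hPd.2]
    · nlinarith [hPd.1, hPd.2]

lemma bartK_n0_zero {p : ℕ} {w : Fin p → ℝ} {P : ℕ → ℝ}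
    (hw : ∀ i, 0 < w i) :
    ∀ N d (nm n0 np : Fin p → ℕ), (∑ j, (nm j + np j)) < N → (∀ i, n0 i = 0) →
      bartK p w P d nm n0 np = 1 := by
  intro N
  induction N using Nat.strong_induction_on with
  | _ N IH =>
  intro d nm n0 np hN h0
  by_cases h : ∀ i, nm i + n0 i + np i = 0
  · rw [bartK, if_pos h]
  · rw [bartK_eq w P d nm n0 np h]
    set W := bartW p w (fun i => nm i + n0 i + np i) with hWdef
    have hWpos : 0 < W := bartW_pos hw h
    have hS : (∑ i ∈ Finset.univ.filter (fun i => nm i + n0 i + np i ≠ 0),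
        (w i / ((nm i + n0 i + np i : ℕ) : ℝ)) *
          ((∑ k ∈ Finset.range (nm i), bartK p w P (d+1) (Function.update nm i k) n0 np) +
           (∑ k ∈ Finset.range (np i), bartK p w P (d+1) nm n0 (Function.update np i k)))) = W := by
      apply Finset.sum_congr rfl
      intro i hi
      have hne : nm i + n0 i + np i ≠ 0 := (Finset.mem_filter.mp hi).2
      have hnpos : (0:ℝ) < ((nm i + n0 i + np i : ℕ) : ℝ) := by
        exact_mod_cast Nat.pos_of_ne_zero hne
      have hA : (∑ k ∈ Finset.range (nm i), bartK p w P (d+1) (Function.update nm i k) n0 np)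
          = (nm i : ℝ) := by
        rw [Finset.sum_congr rfl (fun k hk => IH (∑ j, (nm j + np j)) hN (d+1) _ n0 np
          (by have := sum_upd nm np i k; have := Finset.mem_range.mp hk; omega) h0)]
        simp
      have hB : (∑ k ∈ Finset.range (np i), bartK p w P (d+1) nm n0 (Function.update np i k))
          = (np i : ℝ) := by
        rw [Finset.sum_congr rfl (fun k hk => IH (∑ j, (nm j + np j)) hN (d+1) nm n0 _
          (by have := sum_upd' nm np i k; have := Finset.mem_range.mp hk; omega) h0)]
        simp
      rw [hA, hB]
      have hn : ((nm i + n0 i + np i : ℕ) : ℝ) = (nm i : ℝ) + (np i : ℝ) := by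
        rw [h0 i]; push_cast; ring
      rw [← hn, div_mul_cancel₀ _ hnpos.ne']
    rw [hS, one_div, inv_mul_cancel₀ hWpos.ne']
    ring

/-- Monotonicity statement up to total count `N`. -/
def bartMono (p : ℕ) (w : Fin p → ℝ) (P : ℕ → ℝ) (N : ℕ) : Prop :=
  ∀ d (nm n0 np nm' np' : Fin p → ℕ), (∀ i, nm' i ≤ nm i) → (∀ i, np' i ≤ np i) →
    (∑ j, (nm j + np j)) ≤ N → bartK p w P d nm' n0 np' ≤ bartK p w P d nm n0 np

lemma bartK_step {p : ℕ} {w : Fin p → ℝ} {P : ℕ → ℝ}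
    (hw : ∀ i, 0 < w i) (hP : ∀ d, P d ∈ Set.Icc (0 : ℝ) 1)
    (N : ℕ) (IH : ∀ M, M < N → bartMono p w P M)
    (d : ℕ) (nm n0 np : Fin p → ℕ) (i : Fin p)
    (hN : (∑ j, (nm j + np j)) < N) :
    bartK p w P d nm n0 np ≤ bartK p w P d (Function.update nm i (nm i + 1)) n0 np := by
  by_cases hz : ∀ j, n0 j = 0
  · rw [bartK_n0_zero hw ((∑ j, (nm j + np j)) + 1) d nm n0 np (by omega) hz,
        bartK_n0_zero hw ((∑ j, (Function.update nm i (nm i + 1) j + np j)) + 1) d _ n0 np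
          (by omega) hz]
  push_neg at hz
  obtain ⟨j0, hj0⟩ := hz
  set a' := Function.update nm i (nm i + 1) with ha'
  have ha'i : a' i = nm i + 1 := Function.update_self i (nm i + 1) nm
  have ha'ne : ∀ j, j ≠ i → a' j = nm j := fun j hj => Function.update_of_ne hj _ nm
  have hle : ∀ j, nm j ≤ a' j := by
    intro j; rcases eq_or_ne j i with rfl | hj
    · omega
    · rw [ha'ne j hj]
  have hM0 : (∑ j, (a' j + np j)) = (∑ j, (nm j + np j)) + 1 := by
    have h := sum_upd nm np i (nm i + 1); rw [← ha'] at h; omega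
  have hne : ¬ ∀ j, nm j + n0 j + np j = 0 := fun hc => hj0 (by have := hc j0; omega)
  have hne' : ¬ ∀ j, a' j + n0 j + np j = 0 := fun hc => hj0 (by have := hc j0; omega)
  rw [bartK_eq w P d nm n0 np hne, bartK_eq w P d a' n0 np hne']
  set M0 := ∑ j, (nm j + np j) with hM0def
  have Mono := IH M0 hN
  set K := bartK p w P (d+1) nm n0 np with hK
  have hKIcc : K ∈ Set.Icc (0:ℝ) 1 := bartK_mem_Icc hw hP (M0+1) (d+1) nm n0 np (by omega)
  set F := Finset.univ.filter (fun j => nm j + n0 j + np j ≠ 0) with hF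
  set F' := Finset.univ.filter (fun j => a' j + n0 j + np j ≠ 0) with hF'
  set s : Fin p → ℝ := fun j => (w j / ((nm j + n0 j + np j : ℕ) : ℝ)) *
        ((∑ k ∈ Finset.range (nm j), bartK p w P (d+1) (Function.update nm j k) n0 np) +
         (∑ k ∈ Finset.range (np j), bartK p w P (d+1) nm n0 (Function.update np j k))) with hs
  set s' : Fin p → ℝ := fun j => (w j / ((a' j + n0 j + np j : ℕ) : ℝ)) *
        ((∑ k ∈ Finset.range (a' j), bartK p w P (d+1) (Function.update a' j k) n0 np) +
         (∑ k ∈ Finset.range (np j), bartK p w P (d+1) a' n0 (Function.update np j k))) with hs'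
  -- generic termwise comparison for j ≠ i
  have hjle : ∀ j, j ≠ i → s j ≤ s' j := by
    intro j hj
    have hAle : (∑ k ∈ Finset.range (nm j), bartK p w P (d+1) (Function.update nm j k) n0 np)
        ≤ ∑ k ∈ Finset.range (nm j), bartK p w P (d+1) (Function.update a' j k) n0 np := by
      refine Finset.sum_le_sum (fun k hk => ?_)
      have hk' := Finset.mem_range.mp hk
      refine Mono (d+1) (Function.update a' j k) n0 np (Function.update nm j k) np
        (fun l => ?_) (fun l => le_refl _) ?_
      · rcases eq_or_ne l j with rfl | hl
        · simp [Function.update_self]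
        · simp only [Function.update_of_ne hl]; exact hle l
      · have h1 := sum_upd a' np j k
        have h2 : a' j = nm j := ha'ne j hj
        omega
    have hBle : (∑ k ∈ Finset.range (np j), bartK p w P (d+1) nm n0 (Function.update np j k))
        ≤ ∑ k ∈ Finset.range (np j), bartK p w P (d+1) a' n0 (Function.update np j k) := by
      refine Finset.sum_le_sum (fun k hk => ?_)
      have hk' := Finset.mem_range.mp hk
      refine Mono (d+1) a' n0 (Function.update np j k) nm (Function.update np j k)
        hle (fun l => le_refl _) ?_
      have h1 := sum_upd' a' np j k
      omega
    simp only [hs, hs', ha'ne j hj]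
    apply mul_le_mul_of_nonneg_left (by linarith) (div_nonneg (hw j).le (Nat.cast_nonneg _))
  -- bound: every summand of s j is at most K
  have hsK : ∀ j, nm j + n0 j + np j ≠ 0 → s j ≤ w j * K := by
    intro j hj
    have hnpos : (0:ℝ) < ((nm j + n0 j + np j : ℕ) : ℝ) := by
      exact_mod_cast Nat.pos_of_ne_zero hj
    have hA : (∑ k ∈ Finset.range (nm j), bartK p w P (d+1) (Function.update nm j k) n0 np)
        ≤ (nm j : ℝ) * K := by
      calc _ ≤ ∑ _k ∈ Finset.range (nm j), K := by
            refine Finset.sum_le_sum (fun k hk => ?_)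
            have hk' := Finset.mem_range.mp hk
            refine Mono (d+1) nm n0 np (Function.update nm j k) np (fun l => ?_)
              (fun l => le_refl _) (le_refl _)
            rcases eq_or_ne l j with rfl | hl
            · simp [Function.update_self]; omega
            · simp [Function.update_of_ne hl]
        _ = (nm j : ℝ) * K := by simp [mul_comm]
    have hB : (∑ k ∈ Finset.range (np j), bartK p w P (d+1) nm n0 (Function.update np j k))
        ≤ (np j : ℝ) * K := by
      calc _ ≤ ∑ _k ∈ Finset.range (np j), K := by
            refine Finset.sum_le_sum (fun k hk => ?_)
            have hk' := Finset.mem_range.mp hk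
            refine Mono (d+1) nm n0 np nm (Function.update np j k) (fun l => le_refl _)
              (fun l => ?_) (le_refl _)
            rcases eq_or_ne l j with rfl | hl
            · simp [Function.update_self]; omega
            · simp [Function.update_of_ne hl]
        _ = (np j : ℝ) * K := by simp [mul_comm]
    have hcount : (nm j : ℝ) * K + (np j : ℝ) * K ≤ ((nm j + n0 j + np j : ℕ) : ℝ) * K := by
      have : (nm j : ℝ) + (np j : ℝ) ≤ ((nm j + n0 j + np j : ℕ) : ℝ) := by
        push_cast; linarith [Nat.cast_nonneg (α := ℝ) (n0 j)]
      nlinarith [hKIcc.1]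
    calc s j ≤ (w j / ((nm j + n0 j + np j : ℕ) : ℝ)) * (((nm j + n0 j + np j : ℕ) : ℝ) * K) := by
          apply mul_le_mul_of_nonneg_left (by linarith) (div_nonneg (hw j).le hnpos.le)
      _ = w j * K := by
          rw [div_mul_eq_mul_div, mul_div_assoc]
          congr 1
          rw [mul_comm, mul_div_assoc, div_self hnpos.ne', mul_one]
  -- A+B is at most n_j * K, for every j
  have hABK : ∀ j : Fin p,
      (∑ k ∈ Finset.range (nm j), bartK p w P (d+1) (Function.update nm j k) n0 np) +
      (∑ k ∈ Finset.range (np j), bartK p w P (d+1) nm n0 (Function.update np j k))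
      ≤ ((nm j + n0 j + np j : ℕ) : ℝ) * K := by
    intro j
    have hA : (∑ k ∈ Finset.range (nm j), bartK p w P (d+1) (Function.update nm j k) n0 np)
        ≤ (nm j : ℝ) * K := by
      calc _ ≤ ∑ _k ∈ Finset.range (nm j), K := by
            refine Finset.sum_le_sum (fun k hk => ?_)
            have hk' := Finset.mem_range.mp hk
            refine Mono (d+1) nm n0 np (Function.update nm j k) np (fun l => ?_)
              (fun l => le_refl _) (le_refl _)
            rcases eq_or_ne l j with rfl | hl
            · simp only [Function.update_self]; omega
            · simp [Function.update_of_ne hl]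
        _ = (nm j : ℝ) * K := by simp [mul_comm]
    have hB : (∑ k ∈ Finset.range (np j), bartK p w P (d+1) nm n0 (Function.update np j k))
        ≤ (np j : ℝ) * K := by
      calc _ ≤ ∑ _k ∈ Finset.range (np j), K := by
            refine Finset.sum_le_sum (fun k hk => ?_)
            have hk' := Finset.mem_range.mp hk
            refine Mono (d+1) nm n0 np nm (Function.update np j k) (fun l => le_refl _)
              (fun l => ?_) (le_refl _)
            rcases eq_or_ne l j with rfl | hl
            · simp only [Function.update_self]; omega
            · simp [Function.update_of_ne hl]
        _ = (np j : ℝ) * K := by simp [mul_comm]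
    have hcast : (nm j : ℝ) + (np j : ℝ) ≤ ((nm j + n0 j + np j : ℕ) : ℝ) := by
      push_cast; linarith [Nat.cast_nonneg (α := ℝ) (n0 j)]
    nlinarith [hKIcc.1]
  have hW : 0 < bartW p w (fun j => nm j + n0 j + np j) := bartW_pos hw hne
  have hW' : 0 < bartW p w (fun j => a' j + n0 j + np j) := bartW_pos hw hne'
  have key : 1 / bartW p w (fun j => nm j + n0 j + np j) * ∑ j ∈ F, s j
      ≤ 1 / bartW p w (fun j => a' j + n0 j + np j) * ∑ j ∈ F', s' j := by
    by_cases hni : nm i + n0 i + np i = 0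
    · -- case (b): axis i is newly activated
      have hnm : nm i = 0 := by omega
      have hn0i : n0 i = 0 := by omega
      have hnpi : np i = 0 := by omega
      have hiF : i ∉ F := by
        rw [hF]; simp only [Finset.mem_filter, Finset.mem_univ, true_and, not_not]; omega
      have hFF' : F' = insert i F := by
        rw [hF', hF]
        ext j
        simp only [Finset.mem_insert, Finset.mem_filter, Finset.mem_univ, true_and]
        rcases eq_or_ne j i with rfl | hji
        · simp [ha'i]
        · simp [hji, ha'ne j hji]
      have hWW' : bartW p w (fun j => a' j + n0 j + np j)
          = w i + bartW p w (fun j => nm j + n0 j + np j) := by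
        unfold bartW
        rw [← hF, ← hF', hFF', Finset.sum_insert hiF]
      have hupd : Function.update a' i 0 = nm := by
        rw [ha', Function.update_idem, ← hnm]
        exact Function.update_eq_self i nm
      have hsi' : s' i = w i * K := by
        simp only [hs']
        rw [ha'i, hnm, hn0i, hnpi]
        norm_num [hupd]
        exact Or.inl hK.symm
      have hsum' : ∑ j ∈ F', s' j = w i * K + ∑ j ∈ F, s' j := by
        rw [hFF', Finset.sum_insert hiF, hsi']
      have hST : ∑ j ∈ F, s j ≤ ∑ j ∈ F, s' j :=
        Finset.sum_le_sum (fun j hjF => hjle j (by rintro rfl; exact hiF hjF))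
      have hSWK : ∑ j ∈ F, s j ≤ bartW p w (fun j => nm j + n0 j + np j) * K := by
        have h1 : ∑ j ∈ F, s j ≤ ∑ j ∈ F, w j * K := by
          refine Finset.sum_le_sum (fun j hjF => ?_)
          have hjne : nm j + n0 j + np j ≠ 0 := by
            rw [hF] at hjF; exact (Finset.mem_filter.mp hjF).2
          have hnpos : (0:ℝ) < ((nm j + n0 j + np j : ℕ) : ℝ) := by
            exact_mod_cast Nat.pos_of_ne_zero hjne
          calc s j ≤ (w j / ((nm j + n0 j + np j : ℕ) : ℝ))
                * (((nm j + n0 j + np j : ℕ) : ℝ) * K) := by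
                apply mul_le_mul_of_nonneg_left (hABK j)
                  (div_nonneg (hw j).le hnpos.le)
            _ = w j * K := by
                rw [div_mul_eq_mul_div, mul_div_assoc]
                congr 1
                rw [mul_comm, mul_div_assoc, div_self hnpos.ne', mul_one]
        have h2 : ∑ j ∈ F, w j * K = bartW p w (fun j => nm j + n0 j + np j) * K := by
          rw [← Finset.sum_mul]
          congr 1
        linarith
      rw [hWW', hsum']
      rw [div_mul_eq_mul_div, one_mul, div_mul_eq_mul_div, one_mul,
        div_le_div_iff₀ hW (by linarith [hw i])]
      nlinarith [mul_le_mul_of_nonneg_right hST hW.le,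
        mul_le_mul_of_nonneg_right hSWK (hw i).le]
    · -- case (a): axis i already active
      have hFF' : F' = F := by
        rw [hF', hF]
        ext j
        simp only [Finset.mem_filter, Finset.mem_univ, true_and]
        rcases eq_or_ne j i with rfl | hji
        · simp [ha'i, hni]; intro h1 h2; omega
        · simp [ha'ne j hji]
      have hWW' : bartW p w (fun j => a' j + n0 j + np j)
          = bartW p w (fun j => nm j + n0 j + np j) := by
        unfold bartW
        rw [← hF, ← hF', hFF']
      rw [hFF', hWW']
      apply mul_le_mul_of_nonneg_left _ (by positivity)
      refine Finset.sum_le_sum (fun j hjF => ?_)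
      rcases eq_or_ne j i with rfl | hji
      · -- the special axis
        have hnpos : (0:ℝ) < ((nm j + n0 j + np j : ℕ) : ℝ) := by
          exact_mod_cast Nat.pos_of_ne_zero hni
        have hA' : (∑ k ∈ Finset.range (a' j), bartK p w P (d+1) (Function.update a' j k) n0 np)
            = (∑ k ∈ Finset.range (nm j), bartK p w P (d+1) (Function.update nm j k) n0 np)
              + K := by
          rw [ha'i, Finset.sum_range_succ]
          congr 1
          · refine Finset.sum_congr rfl (fun k hk => ?_)
            congr 1
            rw [ha', Function.update_idem]
          · rw [ha', Function.update_idem, Function.update_eq_self]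
        have hB' : (∑ k ∈ Finset.range (np j), bartK p w P (d+1) nm n0 (Function.update np j k))
            ≤ ∑ k ∈ Finset.range (np j), bartK p w P (d+1) a' n0 (Function.update np j k) := by
          refine Finset.sum_le_sum (fun k hk => ?_)
          have hk' := Finset.mem_range.mp hk
          refine Mono (d+1) a' n0 (Function.update np j k) nm (Function.update np j k)
            hle (fun l => le_refl _) ?_
          have h1 := sum_upd' a' np j k
          omega
        have hXK := hABK j
        simp only [hs, hs', hA']
        have hcast : ((a' j + n0 j + np j : ℕ) : ℝ) = ((nm j + n0 j + np j : ℕ) : ℝ) + 1 := by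
          rw [ha'i]; push_cast; ring
        rw [hcast]
        set A := ∑ k ∈ Finset.range (nm j), bartK p w P (d+1) (Function.update nm j k) n0 np
        set B := ∑ k ∈ Finset.range (np j), bartK p w P (d+1) nm n0 (Function.update np j k)
        set B' := ∑ k ∈ Finset.range (np j), bartK p w P (d+1) a' n0 (Function.update np j k)
        set X := ((nm j + n0 j + np j : ℕ) : ℝ)
        have step1 : w j / X * (A + B) ≤ w j / (X + 1) * (A + B + K) := by
          rw [div_mul_eq_mul_div, div_mul_eq_mul_div, div_le_div_iff₀ hnpos (by linarith)]
          have h5 : (A + B) * (X + 1) ≤ (A + B + K) * X := by nlinarith [hXK]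
          have h6 := mul_le_mul_of_nonneg_left h5 (hw j).le
          nlinarith [h6]
        have step2 : w j / (X + 1) * (A + B + K) ≤ w j / (X + 1) * (A + K + B') := by
          apply mul_le_mul_of_nonneg_left (by linarith)
            (div_nonneg (hw j).le (by linarith))
        linarith
      · exact hjle j hji
  have hP0 := (hP d).1
  have hfin := mul_le_mul_of_nonneg_left (sub_le_sub_left key 1) hP0
  linarith

lemma bartK_swap {p : ℕ} {w : Fin p → ℝ} {P : ℕ → ℝ} :
    ∀ N d (nm n0 np : Fin p → ℕ), (∑ j, (nm j + np j)) < N →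
      bartK p w P d nm n0 np = bartK p w P d np n0 nm := by
  intro N
  induction N using Nat.strong_induction_on with
  | _ N IH =>
  intro d nm n0 np hN
  by_cases h : ∀ i, nm i + n0 i + np i = 0
  · have h' : ∀ i, np i + n0 i + nm i = 0 := fun i => by have := h i; omega
    rw [bartK, if_pos h, bartK, if_pos h']
  · have h' : ¬ ∀ i, np i + n0 i + nm i = 0 := fun hc => h (fun i => by have := hc i; omega)
    rw [bartK_eq w P d nm n0 np h, bartK_eq w P d np n0 nm h']
    have hv : (fun i => np i + n0 i + nm i) = (fun i => nm i + n0 i + np i) :=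
      funext fun i => by omega
    rw [hv]
    have hfilter : Finset.univ.filter (fun i => np i + n0 i + nm i ≠ 0)
        = Finset.univ.filter (fun i => nm i + n0 i + np i ≠ 0) := by
      apply Finset.filter_congr
      intro j _
      constructor <;> (intro hh; omega)
    rw [hfilter]
    have hsum : (∑ j ∈ Finset.univ.filter (fun i => nm i + n0 i + np i ≠ 0),
          (w j / ((np j + n0 j + nm j : ℕ) : ℝ)) *
          ((∑ k ∈ Finset.range (np j), bartK p w P (d+1) (Function.update np j k) n0 nm) +
           (∑ k ∈ Finset.range (nm j), bartK p w P (d+1) np n0 (Function.update nm j k))))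
        = ∑ j ∈ Finset.univ.filter (fun i => nm i + n0 i + np i ≠ 0),
          (w j / ((nm j + n0 j + np j : ℕ) : ℝ)) *
          ((∑ k ∈ Finset.range (nm j), bartK p w P (d+1) (Function.update nm j k) n0 np) +
           (∑ k ∈ Finset.range (np j), bartK p w P (d+1) nm n0 (Function.update np j k))) := by
      refine Finset.sum_congr rfl (fun j _ => ?_)
      have hn : np j + n0 j + nm j = nm j + n0 j + np j := by omega
      rw [hn]
      congr 1
      rw [add_comm]
      congr 1
      · refine Finset.sum_congr rfl (fun k hk => ?_)
        have hk' := Finset.mem_range.mp hk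
        refine (IH (∑ l, (nm l + np l)) hN (d+1) (Function.update nm j k) n0 np ?_).symm
        have h1 := sum_upd nm np j k
        omega
      · refine Finset.sum_congr rfl (fun k hk => ?_)
        have hk' := Finset.mem_range.mp hk
        refine IH (∑ l, (nm l + np l)) hN (d+1) (Function.update np j k) n0 nm ?_
        have h1 := sum_upd np nm j k
        have hcomm : (∑ l, (np l + nm l)) = ∑ l, (nm l + np l) :=
          Finset.sum_congr rfl (fun l _ => by omega)
        omega
    rw [hsum]

lemma bartK_mono {p : ℕ} {w : Fin p → ℝ} {P : ℕ → ℝ}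
    (hw : ∀ i, 0 < w i) (hP : ∀ d, P d ∈ Set.Icc (0 : ℝ) 1) :
    ∀ N, bartMono p w P N := by
  intro N
  induction N using Nat.strong_induction_on with
  | _ N IH =>
  intro d nm n0 np nm' np' hm hp' hN
  have H : ∀ g (nm' np' : Fin p → ℕ), (∀ i, nm' i ≤ nm i) → (∀ i, np' i ≤ np i) →
      (∑ j, ((nm j - nm' j) + (np j - np' j))) ≤ g →
      bartK p w P d nm' n0 np' ≤ bartK p w P d nm n0 np := by
    intro g
    induction g with
    | zero =>
      intro nm' np' hm hp' hg
      have h0 := (Finset.sum_eq_zero_iff).mp (Nat.le_antisymm hg (Nat.zero_le _))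
      have hnm : nm' = nm := funext fun j => by have := h0 j (Finset.mem_univ j); have := hm j; omega
      have hnp : np' = np := funext fun j => by have := h0 j (Finset.mem_univ j); have := hp' j; omega
      rw [hnm, hnp]
    | succ g ih =>
      intro nm' np' hm hp' hg
      by_cases he : (∑ j, ((nm j - nm' j) + (np j - np' j))) ≤ g
      · exact ih nm' np' hm hp' he
      have hex : ∃ j, nm' j < nm j ∨ np' j < np j := by
        by_contra hc
        push_neg at hc
        have : (∑ j, ((nm j - nm' j) + (np j - np' j))) = 0 :=
          Finset.sum_eq_zero (fun j _ => by have h1 := (hc j).1; have h2 := (hc j).2; omega)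
        omega
      obtain ⟨j, hj⟩ := hex
      have hmeas : (∑ l, (nm' l + np' l)) < ∑ l, (nm l + np l) := by
        refine Finset.sum_lt_sum (fun l _ => by have := hm l; have := hp' l; omega)
          ⟨j, Finset.mem_univ j, by have := hm j; have := hp' j; omega⟩
      rcases hj with hj | hj
      · have h1 : bartK p w P d nm' n0 np' ≤
            bartK p w P d (Function.update nm' j (nm' j + 1)) n0 np' := by
          apply bartK_step hw hP N IH d nm' n0 np' j
          omega
        have h2 : bartK p w P d (Function.update nm' j (nm' j + 1)) n0 np' ≤
            bartK p w P d nm n0 np := by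
          refine ih (Function.update nm' j (nm' j + 1)) np' (fun l => ?_) hp' ?_
          · rcases eq_or_ne l j with rfl | hl
            · simp only [Function.update_self]; omega
            · simp only [Function.update_of_ne hl]; exact hm l
          · have hlt : (∑ l, ((nm l - Function.update nm' j (nm' j + 1) l) + (np l - np' l)))
                < ∑ l, ((nm l - nm' l) + (np l - np' l)) := by
              refine Finset.sum_lt_sum (fun l _ => ?_) ⟨j, Finset.mem_univ j, ?_⟩
              · rcases eq_or_ne l j with rfl | hl
                · simp only [Function.update_self]; omega
                · simp only [Function.update_of_ne hl]; omega
              · simp only [Function.update_self]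
                have := hm j; omega
            omega
        exact le_trans h1 h2
      · have hswap1 : bartK p w P d nm' n0 np' = bartK p w P d np' n0 nm' :=
          bartK_swap ((∑ l, (nm' l + np' l)) + 1) d nm' n0 np' (by omega)
        have h1 : bartK p w P d np' n0 nm' ≤
            bartK p w P d (Function.update np' j (np' j + 1)) n0 nm' := by
          apply bartK_step hw hP N IH d np' n0 nm' j
          have : (∑ l, (np' l + nm' l)) = ∑ l, (nm' l + np' l) :=
            Finset.sum_congr rfl (fun l _ => by omega)
          omega
        have hswap2 : bartK p w P d (Function.update np' j (np' j + 1)) n0 nm'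
            = bartK p w P d nm' n0 (Function.update np' j (np' j + 1)) := by
          apply bartK_swap ((∑ l, (Function.update np' j (np' j + 1) l + nm' l)) + 1)
          omega
        have h2 : bartK p w P d nm' n0 (Function.update np' j (np' j + 1)) ≤
            bartK p w P d nm n0 np := by
          refine ih nm' (Function.update np' j (np' j + 1)) hm (fun l => ?_) ?_
          · rcases eq_or_ne l j with rfl | hl
            · simp only [Function.update_self]; omega
            · simp only [Function.update_of_ne hl]; exact hp' l
          · have hlt : (∑ l, ((nm l - nm' l) + (np l - Function.update np' j (np' j + 1) l)))
                < ∑ l, ((nm l - nm' l) + (np l - np' l)) := by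
              refine Finset.sum_lt_sum (fun l _ => ?_) ⟨j, Finset.mem_univ j, ?_⟩
              · rcases eq_or_ne l j with rfl | hl
                · simp only [Function.update_self]; omega
                · simp only [Function.update_of_ne hl]; omega
              · simp only [Function.update_self]
                have := hp' j; omega
            omega
        rw [hswap1]
        exact le_trans h1 (le_trans (le_of_eq hswap2) h2)
  exact H (∑ j, ((nm j - nm' j) + (np j - np' j))) nm' np' hm hp' (le_refl _)

lemma bartK_mono' {p : ℕ} {w : Fin p → ℝ} {P : ℕ → ℝ}
    (hw : ∀ i, 0 < w i) (hP : ∀ d, P d ∈ Set.Icc (0 : ℝ) 1)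
    {d : ℕ} {nm n0 np nm' np' : Fin p → ℕ}
    (hm : ∀ i, nm' i ≤ nm i) (hp' : ∀ i, np' i ≤ np i) :
    bartK p w P d nm' n0 np' ≤ bartK p w P d nm n0 np :=
  bartK_mono hw hP (∑ j, (nm j + np j)) d nm n0 np nm' np' hm hp' (le_refl _)

lemma bartK_le_aux {p : ℕ} {w : Fin p → ℝ} {P : ℕ → ℝ}
    (hw : ∀ i, 0 < w i) (hP : ∀ d, P d ∈ Set.Icc (0 : ℝ) 1)
    (R : Finset ℕ) (Dr : ℕ) (bm b0 bp : Fin p → ℕ) :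
    ∀ J d (nm np : Fin p → ℕ), Dr - d < J → d ≤ Dr →
      (∀ i, nm i ≤ bm i) → (∀ i, np i ≤ bp i) →
      bartK p w P d nm b0 np ≤ bartKPRAux p w P R Dr 1 bm b0 bp d nm b0 np := by
  intro J
  induction J with
  | zero => intro d nm np hJ; omega
  | succ J ihJ =>
    intro d nm np hJ hd hbm hbp
    by_cases h0 : ∀ i, nm i + b0 i + np i = 0
    · rw [bartK, if_pos h0, bartKPRAux, if_pos h0]
    by_cases hDr : Dr ≤ d
    · rw [bartKPRAux, if_neg h0, if_pos hDr]
      have h1 : (if ∀ i, b0 i = 0 then (1:ℝ) else 1 - (1 - 1) * P Dr) = 1 := by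
        split <;> norm_num
      rw [h1]
      exact (bartK_mem_Icc hw hP ((∑ j, (nm j + np j)) + 1) d nm b0 np (by omega)).2
    · push_neg at hDr
      rw [bartK_eq w P d nm b0 np h0, bartKPRAux, if_neg h0, if_neg (not_le.mpr hDr)]
      have hW := bartW_pos hw h0
      have key : (∑ i ∈ Finset.univ.filter (fun i => nm i + b0 i + np i ≠ 0),
            (w i / ((nm i + b0 i + np i : ℕ) : ℝ)) *
            ((∑ k ∈ Finset.range (nm i), bartK p w P (d+1) (Function.update nm i k) b0 np) +
             (∑ k ∈ Finset.range (np i), bartK p w P (d+1) nm b0 (Function.update np i k))))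
          ≤ ∑ i ∈ Finset.univ.filter (fun i => nm i + b0 i + np i ≠ 0),
            (w i / ((nm i + b0 i + np i : ℕ) : ℝ)) *
            ((∑ k ∈ Finset.range (nm i),
                (if d + 1 ∈ R then bartKPRAux p w P R Dr 1 bm b0 bp (d+1) bm b0 bp
                 else bartKPRAux p w P R Dr 1 bm b0 bp (d+1) (Function.update nm i k) b0 np)) +
             (∑ k ∈ Finset.range (np i),
                (if d + 1 ∈ R then bartKPRAux p w P R Dr 1 bm b0 bp (d+1) bm b0 bp
                 else bartKPRAux p w P R Dr 1 bm b0 bp (d+1) nm b0 (Function.update np i k)))) := by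
        refine Finset.sum_le_sum (fun i _ => ?_)
        apply mul_le_mul_of_nonneg_left _ (div_nonneg (hw i).le (Nat.cast_nonneg _))
        by_cases hR : d + 1 ∈ R
        · simp only [if_pos hR]
          apply add_le_add
          · refine Finset.sum_le_sum (fun k hk => ?_)
            calc bartK p w P (d+1) (Function.update nm i k) b0 np
                ≤ bartK p w P (d+1) bm b0 bp := by
                  apply bartK_mono' hw hP (fun l => ?_) hbp
                  rcases eq_or_ne l i with rfl | hl
                  · simp only [Function.update_self]
                    have := Finset.mem_range.mp hk; have := hbm l; omega
                  · simp only [Function.update_of_ne hl]; exact hbm l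
              _ ≤ bartKPRAux p w P R Dr 1 bm b0 bp (d+1) bm b0 bp :=
                  ihJ (d+1) bm bp (by omega) (by omega) (fun l => le_refl _) (fun l => le_refl _)
          · refine Finset.sum_le_sum (fun k hk => ?_)
            calc bartK p w P (d+1) nm b0 (Function.update np i k)
                ≤ bartK p w P (d+1) bm b0 bp := by
                  apply bartK_mono' hw hP hbm (fun l => ?_)
                  rcases eq_or_ne l i with rfl | hl
                  · simp only [Function.update_self]
                    have := Finset.mem_range.mp hk; have := hbp l; omega
                  · simp only [Function.update_of_ne hl]; exact hbp l
              _ ≤ bartKPRAux p w P R Dr 1 bm b0 bp (d+1) bm b0 bp :=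
                  ihJ (d+1) bm bp (by omega) (by omega) (fun l => le_refl _) (fun l => le_refl _)
        · simp only [if_neg hR]
          apply add_le_add
          · refine Finset.sum_le_sum (fun k hk => ?_)
            refine ihJ (d+1) (Function.update nm i k) np (by omega) (by omega) (fun l => ?_) hbp
            rcases eq_or_ne l i with rfl | hl
            · simp only [Function.update_self]
              have := Finset.mem_range.mp hk; have := hbm l; omega
            · simp only [Function.update_of_ne hl]; exact hbm l
          · refine Finset.sum_le_sum (fun k hk => ?_)
            refine ihJ (d+1) nm (Function.update np i k) (by omega) (by omega) hbm (fun l => ?_)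
            rcases eq_or_ne l i with rfl | hl
            · simp only [Function.update_self]
              have := Finset.mem_range.mp hk; have := hbp l; omega
            · simp only [Function.update_of_ne hl]; exact hbp l
      have k2 := mul_le_mul_of_nonneg_left key (by positivity :
        (0:ℝ) ≤ 1 / bartW p w (fun i => nm i + b0 i + np i))
      have k3 := mul_le_mul_of_nonneg_left (sub_le_sub_left k2 1) (hP d).1
      linarith


/-- Theorem 11: for strictly increasing depths `D_1 < … < D_{r+1}` and every `d ≤ D_{r+1}`,
the pseudo-recursive truncated sub-correlation function at `γ = 1` is an upper bound on the
exact BART sub-correlation function: `k_d ≤ k^{(D_1,…,D_{r+1})}_{d,1}`. -/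
theorem bartK_le_bartKPR
    (p : ℕ) (hp : 1 ≤ p) (w : Fin p → ℝ) (hw : ∀ i, 0 < w i)
    (P : ℕ → ℝ) (hP : ∀ d, P d ∈ Set.Icc (0 : ℝ) 1)
    (r : ℕ) (Ds : Fin (r + 1) → ℕ) (hDs : StrictMono Ds)
    (d : ℕ) (hd : d ≤ Ds (Fin.last r)) (nm n0 np : Fin p → ℕ) :
    bartK p w P d nm n0 np ≤ bartKPR p w P r Ds 1 d nm n0 np := by
  unfold bartKPR
  exact bartK_le_aux hw hP _ _ nm n0 np (Ds (Fin.last r) - d + 1) d nm np (by omega) hd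
    (fun l => le_refl _) (fun l => le_refl _)
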